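/- Let r_h > 0 and G > 0 be real numbers, and let B', F, F', R_h, f_h be real numbers (the horizon values of the lapse derivative, f'(R), its radial derivative, the Ricci scalar, and f(R), respectively). Define the horizon temperature T = B'/(4π), the horizon radial pressure P by 8πG·P = F·(B'/r_h − 1/r_h²) − (1/2)·B'·F' − (1/2)·(R_h·F − f_h), the energy coefficient c_E = (1/(2G))·[F + (r_h²/2)·(R_h·F − f_h)], the entropy coefficient c_S = (π/G)·(2·r_h·F + r_h²·F'), the volume coefficient c_V = 4π·r_h², and the additional-entropy coefficient c_I = −(r_h²·B'·F')/(2G). Then c_E = T·c_S − P·c_V + c_I. -/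
import Mathlib

open Real

/-- Horizon first law for static spherically symmetric black holes in f(R) gravity,
stated as an identity among the coefficients of dr_h:
c_E = T·c_S − P·c_V + c_I. -/
theorem horizon_first_law_coefficients
    (r_h G B' F F' R_h f_h T P c_E c_S c_V c_I : ℝ)
    (hr : r_h > 0) (hG : G > 0)
    (hT : T = B' / (4 * π))
    (hP : 8 * π * G * P =
      F * (B' / r_h - 1 / r_h ^ 2) - (1 / 2) * B' * F' - (1 / 2) * (R_h * F - f_h))
    (hE : c_E = (1 / (2 * G)) * (F + (r_h ^ 2 / 2) * (R_h * F - f_h)))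
    (hS : c_S = (π / G) * (2 * r_h * F + r_h ^ 2 * F'))
    (hV : c_V = 4 * π * r_h ^ 2)
    (hI : c_I = -(r_h ^ 2 * B' * F') / (2 * G)) :
    c_E = T * c_S - P * c_V + c_I := by
  have hpi : π ≠ 0 := Real.pi_ne_zero
  have hP' : P = (F * (B' / r_h - 1 / r_h ^ 2) - (1 / 2) * B' * F' - (1 / 2) * (R_h * F - f_h)) / (8 * π * G) := by
    field_simp at hP ⊢; linarith
  subst hT hP' hE hS hV hI
  field_simp
  ring
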